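/- Let V be an infinite-dimensional vector space over a field F, α an infinite cardinal with α ≤ dim_F V, and z ∈ End_F(V) with z ∉ I_α. If the commutator [z, a] = za − az lies in I_α for all a ∈ End_F(V), then dim_F(ker z) < α. -/

import Mathlib

open Cardinal

/-- If `z ∉ I_α` but all commutators `[z, a]` lie in `I_α`, then `dim (ker z) < α`. -/
theorem ker_small_of_central_mod_rankIdeal (F V : Type*) [Field F] [AddCommGroup V] [Module F V]
    (hV : ℵ₀ ≤ Module.rank F V) (α : Cardinal) (hα : ℵ₀ ≤ α) (hα' : α ≤ Module.rank F V)
    (z : Module.End F V) (hz : ¬ LinearMap.rank z < α)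
    (hcomm : ∀ a : Module.End F V, LinearMap.rank (z * a - a * z) < α) :
    Module.rank F (LinearMap.ker z) < α := by
  by_contra hker
  push_neg at hz hker
  -- An α-sized independent family `s` in `V` with `z` injective-independent on it.
  obtain ⟨s, hscard, hsind⟩ := LinearMap.le_rank_iff_exists_linearIndependent.mp hz
  rw [Cardinal.lift_inj] at hscard
  -- The image `T := z '' s` is an α-sized independent set inside `range z`.
  set T : Set V := z '' s with hTdef
  have hTind : LinearIndependent F ((↑) : T → V) :=
    LinearIndepOn.image_of_comp (s := s) z id hsind
  have hTcard : #T = α := by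
    rw [← hscard]
    exact Cardinal.mk_image_eq_of_injOn _ _
      (Set.injOn_iff_injective.mpr (by
        have : Function.Injective fun x : s => z x := hsind.injective
        exact this))
  -- An α-sized independent set `K` inside `ker z`.
  obtain ⟨sK, hsKcard, hsKind⟩ :=
    (le_rank_iff_exists_linearIndependent (K := F) (V := LinearMap.ker z)).mp hker
  set K : Set V := Subtype.val '' sK with hKdef
  have hKind : LinearIndependent F ((↑) : K → V) := by
    have h1 : LinearIndependent F fun x : sK => ((x : LinearMap.ker z) : V) :=
      hsKind.map' (Submodule.subtype (LinearMap.ker z)) (Submodule.ker_subtype _)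
    exact LinearIndepOn.image_of_comp (s := sK) Subtype.val id h1
  have hKcard : #K = α := by
    rw [← hsKcard]
    exact Cardinal.mk_image_eq_of_injOn _ _ Subtype.val_injective.injOn
  have hKker : K ⊆ (LinearMap.ker z : Set V) := by
    rintro x ⟨y, _, rfl⟩
    exact y.2
  -- A bijection `e : T ≃ K`.
  obtain ⟨e⟩ : Nonempty (T ≃ K) := Cardinal.eq.mp (hTcard.trans hKcard.symm)
  -- Extend `T` to a basis of `V` and define `a` sending `t ∈ T` to `e t ∈ K ⊆ ker z`,
  -- and the other basis vectors to `0`.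
  let B := (show LinearIndepOn F id T from hTind).extend (Set.subset_univ T)
  let bB : Module.Basis B F V := Module.Basis.extend hTind
  classical
  let a : Module.End F V :=
    bB.constr F (fun x : B => if h : (x : V) ∈ T then (e ⟨x, h⟩ : V) else 0)
  -- `a` maps every basis vector into `ker z`.
  have ha_basis : ∀ x : B, a (bB x) = if h : (x : V) ∈ T then (e ⟨x, h⟩ : V) else 0 := by
    intro x
    simp [a, Module.Basis.constr_basis]
  have hza : z * a = 0 := by
    apply bB.ext
    intro x
    simp only [Module.End.mul_apply, LinearMap.zero_apply]
    rw [ha_basis x]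
    split
    · next h => exact hKker (e ⟨x, h⟩).2
    · exact map_zero z
  -- `a` restricted to `T` is `e`.
  have ha_T : ∀ t : T, a (t : V) = (e t : V) := by
    intro t
    have hmem : (t : V) ∈ B := (show LinearIndepOn F id T from hTind).subset_extend _ t.2
    have := ha_basis ⟨(t : V), hmem⟩
    rw [show bB ⟨(t : V), hmem⟩ = (t : V) from Module.Basis.extend_apply_self _ _] at this
    rw [this]
    simp [t.2]
  -- `K` is contained in the range of `a * z`, so `rank (a * z) ≥ α`.
  have hKrange : K ⊆ (LinearMap.range (a * z) : Set V) := by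
    intro k hk
    obtain ⟨t, ht⟩ := e.surjective ⟨k, hk⟩
    obtain ⟨v, hv, hvz⟩ := t.2
    refine ⟨v, ?_⟩
    simp only [Module.End.mul_apply]
    rw [hvz, ha_T t, ht]
  have hrank_az : α ≤ LinearMap.rank (a * z) := by
    calc α = #K := hKcard.symm
      _ = Module.rank F (Submodule.span F K) := (rank_span_set hKind).symm
      _ ≤ Module.rank F (LinearMap.range (a * z)) :=
          Submodule.rank_mono (Submodule.span_le.mpr hKrange)
  -- But `z * a - a * z = -(a * z)` has rank `< α`: contradiction.
  have hrank_eq : LinearMap.rank (z * a - a * z) = LinearMap.rank (a * z) := by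
    rw [hza, zero_sub]
    unfold LinearMap.rank
    rw [LinearMap.range_neg]
  exact absurd (hcomm a) (by rw [hrank_eq]; exact not_lt.mpr hrank_az)
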